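/- Let p > d ≥ 1 with p prime, and let f(x) ∈ W[x] be a monic polynomial of degree d over the Witt vectors W over F_q (or over Z_p). For every natural number a ≥ 1, the coefficient of x^(p^a - 1) in f(x)^(Σ_{v=0}^{a-1} ⌈(p-1)/d⌉ p^v) is congruent modulo p to the product over v = 0,…,a-1 of the σ^v-twists of the coefficient of x^(p-1) in f(x)^⌈(p-1)/d⌉, where σ is the Frobenius on W. In particular, over Z_p it is congruent to ([f(x)^⌈(p-1)/d⌉]_{p-1})^a mod p. -/

import Mathlib

open Polynomial

lemma key_zmod (p d : ℕ) [hp : Fact p.Prime] (hd : 1 ≤ d) (hpd : d < p)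
    (g : Polynomial (ZMod p)) (hg : g.Monic) (hdeg : g.natDegree = d) (a : ℕ) :
    (g ^ ∑ v ∈ Finset.range a, ((p - 2 + d) / d) * p ^ v).coeff (p ^ a - 1)
      = ((g ^ ((p - 2 + d) / d)).coeff (p - 1)) ^ a := by
  induction a with
  | zero => simp
  | succ a ih =>
    set μ := (p - 2 + d) / d with hμ
    have hp1 : 1 < p := hp.out.one_lt
    have hppos : 0 < p := hp.out.pos
    have hsum : ∑ v ∈ Finset.range (a+1), μ * p ^ v
        = μ + p * ∑ v ∈ Finset.range a, μ * p ^ v := by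
      rw [Finset.sum_range_succ', Finset.mul_sum]
      simp only [pow_succ, pow_zero, mul_one]
      rw [add_comm]
      congr 1
      apply Finset.sum_congr rfl
      intro i _
      ring
    have hfrob : (g ^ ∑ v ∈ Finset.range a, μ * p ^ v) ^ p
        = Polynomial.expand (ZMod p) p (g ^ ∑ v ∈ Finset.range a, μ * p ^ v) := by
      rw [ZMod.expand_card]
    rw [hsum, pow_add, pow_mul', hfrob]
    have hμd : μ * d ≤ p - 2 + d := Nat.div_mul_le_self _ _
    have hple : p ≤ p ^ (a + 1) := Nat.le_self_pow (by omega) p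
    rw [Polynomial.coeff_mul]
    rw [Finset.sum_eq_single (p - 1, p ^ (a + 1) - p)]
    · rw [Polynomial.coeff_expand hppos]
      have hpa : 1 ≤ p ^ a := Nat.one_le_pow _ _ hppos
      have hmul : p * (p ^ a - 1) = p ^ (a + 1) - p := by
        rw [Nat.mul_sub, mul_one, ← pow_succ']
      have hdvd : p ∣ p ^ (a + 1) - p := ⟨p ^ a - 1, hmul.symm⟩
      rw [if_pos hdvd]
      obtain ⟨k, hk⟩ := hdvd
      have hkval : k = p ^ a - 1 := by
        have := hk.symm.trans hmul.symm
        exact Nat.eq_of_mul_eq_mul_left hppos this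
      rw [hk, Nat.mul_div_cancel_left _ hppos, hkval, ih, pow_succ]
      ring
    · rintro ⟨i, j⟩ hmem hne
      rw [Finset.HasAntidiagonal.mem_antidiagonal] at hmem
      simp only at hmem ⊢
      rw [Polynomial.coeff_expand hppos]
      by_cases hj : p ∣ j
      · rw [if_pos hj]
        -- show (g^μ).coeff i = 0
        have hi1 : p ∣ i + 1 := by
          have hpp : p ∣ p ^ (a + 1) := dvd_pow_self p (by omega)
          obtain ⟨u, hu⟩ := hj
          obtain ⟨w, hw⟩ := hpp
          have : i + 1 + j = p ^ (a+1) := by omega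
          refine ⟨w - u, ?_⟩
          rw [Nat.mul_sub]
          omega
        obtain ⟨m, hm⟩ := hi1
        have hine : i ≠ p - 1 := by
          intro h
          apply hne
          have hj' : j = p ^ (a + 1) - p := by omega
          rw [h, hj']
        have hi2p : 2 * p - 1 ≤ i := by
          rcases Nat.lt_or_ge m 2 with h | h
          · interval_cases m
            · rw [mul_zero] at hm; omega
            · rw [mul_one] at hm; omega
          · have h2p : p * 2 ≤ p * m := Nat.mul_le_mul_left p h
            omega
        have hideg : (g ^ μ).natDegree < i := by
          rw [hg.natDegree_pow, hdeg]
          omega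
        rw [Polynomial.coeff_eq_zero_of_natDegree_lt hideg, zero_mul]
      · rw [if_neg hj, mul_zero]
    · intro h
      exfalso
      apply h
      rw [Finset.HasAntidiagonal.mem_antidiagonal]
      simp only
      omega

/-- For `p > d ≥ 1` prime and `f ∈ Z_p[x]` monic of degree `d` (so the Frobenius σ is
the identity), the `x^(p^a-1)`-coefficient of `f^(Σ_{v<a} ⌈(p-1)/d⌉ p^v)` is congruent
mod `p` to the `a`-th power of the `x^(p-1)`-coefficient of `f^⌈(p-1)/d⌉`.
Here `⌈(p-1)/d⌉ = (p - 2 + d)/d` in natural division. -/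
theorem stmt8 (p d : ℕ) [hp : Fact p.Prime] (hd : 1 ≤ d) (hpd : d < p)
    (f : Polynomial ℤ_[p]) (hf : f.Monic) (hdeg : f.natDegree = d)
    (a : ℕ) (ha : 1 ≤ a) :
    (p : ℤ_[p]) ∣
      (f ^ (∑ v ∈ Finset.range a, ((p - 2 + d) / d) * p ^ v)).coeff (p ^ a - 1) -
      ((f ^ ((p - 2 + d) / d)).coeff (p - 1)) ^ a := by
  set φ := PadicInt.toZMod (p := p)
  have hker : ∀ x : ℤ_[p], φ x = 0 → (p : ℤ_[p]) ∣ x := by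
    intro x hx
    have : x ∈ RingHom.ker φ := hx
    rw [PadicInt.ker_toZMod, PadicInt.maximalIdeal_eq_span_p,
      Ideal.mem_span_singleton] at this
    exact this
  apply hker
  rw [map_sub, map_pow]
  have hmap : ∀ (n k : ℕ), φ ((f ^ n).coeff k) = ((f.map φ) ^ n).coeff k := by
    intro n k
    rw [← Polynomial.map_pow, Polynomial.coeff_map]
  rw [hmap, hmap]
  have := key_zmod p d hd hpd (f.map φ) (hf.map φ) (by rw [hf.natDegree_map, hdeg]) a
  rw [this, sub_self]
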